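/- Let a ∈ ℝⁿ with g(a) = 0, and assume on the closed ball B(a, m') = {y : ‖y − a‖ ≤ m'} that ∇_min ≤ ‖∇g(y)‖ and ∇²g(y) ⪯ λ^Δ_max·I, with ∇_min > 0, λ^Δ_max > 0. Set φ_g = ∇_min/λ^Δ_max and m_φ = (min{φ_g²/2, √(φ_g⁴/4 + (m')²φ_g²) − φ_g²/2})^{1/2}. Let μ ∈ ℝⁿ be a unit vector with ⟨μ, ∇g(a)⟩ = 0 and let 0 ≤ m ≤ m_φ. Then the point a + mμ − (m²/φ_g)·∇g(a)/‖∇g(a)‖ belongs to 𝒜, and consequently the metric projection proj_𝒜(a + mμ) of a + mμ onto 𝒜 satisfies ‖proj_𝒜(a + mμ) − (a + mμ)‖ ≤ m²/φ_g. -/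

import Mathlib

open RealInnerProductSpace

open Set in

/-- Second-order Taylor bound on [0,1] from a pointwise upper bound on f''. -/
lemma taylor_aux {f f' f'' : ℝ → ℝ} {M : ℝ}
    (hf : ∀ t, HasDerivAt f (f' t) t)
    (hf' : ∀ t, HasDerivAt f' (f'' t) t)
    (hM : ∀ t ∈ Icc (0:ℝ) 1, f'' t ≤ M) :
    f 1 ≤ f 0 + f' 0 + M / 2 := by
  set F : ℝ → ℝ := fun t => f 0 + t * f' 0 + M * t ^ 2 / 2 - f t with hF
  set F' : ℝ → ℝ := fun t => f' 0 + M * t - f' t with hF'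
  have hFd : ∀ t, HasDerivAt F (F' t) t := by
    intro t
    have h1 : HasDerivAt (fun t : ℝ => f 0 + t * f' 0 + M * t ^ 2 / 2)
        (f' 0 + M * t) t := by
      have := ((hasDerivAt_id t).mul_const (f' 0)).const_add (f 0)
      have h2 := (((hasDerivAt_pow 2 t).const_mul M).div_const 2)
      simpa [Pi.add_def, mul_comm, mul_assoc, mul_div_assoc] using this.add h2
    simpa [Pi.sub_def, hF, hF'] using h1.sub (hf t)
  have hF'd : ∀ t, HasDerivAt F' (M - f'' t) t := by
    intro t
    have h1 : HasDerivAt (fun t : ℝ => f' 0 + M * t) M t := by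
      simpa using ((hasDerivAt_id t).const_mul M).const_add (f' 0)
    simpa [Pi.sub_def, hF'] using h1.sub (hf' t)
  have hF'mono : MonotoneOn F' (Icc 0 1) := by
    apply monotoneOn_of_hasDerivWithinAt_nonneg (f := F') (f' := fun t => M - f'' t)
      (convex_Icc 0 1)
      (fun t _ => (hF'd t).continuousAt.continuousWithinAt)
      (fun t ht => (hF'd t).hasDerivWithinAt)
    intro t ht
    rw [interior_Icc] at ht
    have := hM t ⟨ht.1.le, ht.2.le⟩
    linarith
  have hF'0 : F' 0 = 0 := by simp [hF']
  have hF'nonneg : ∀ t ∈ Icc (0:ℝ) 1, 0 ≤ F' t := by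
    intro t ht
    have := hF'mono (left_mem_Icc.2 one_pos.le) ht ht.1
    rwa [hF'0] at this
  have hFmono : MonotoneOn F (Icc 0 1) := by
    apply monotoneOn_of_hasDerivWithinAt_nonneg (f := F) (f' := F')
      (convex_Icc 0 1)
      (fun t _ => (hFd t).continuousAt.continuousWithinAt)
      (fun t ht => (hFd t).hasDerivWithinAt)
    intro t ht
    rw [interior_Icc] at ht
    exact hF'nonneg t ⟨ht.1.le, ht.2.le⟩
  have := hFmono (left_mem_Icc.2 one_pos.le) (right_mem_Icc.2 one_pos.le) one_pos.le
  simp only [hF] at this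
  nlinarith [this]

set_option maxHeartbeats 1000000 in
/-- tangential step and projection. Let `a` be a boundary point of
`𝒜 = {g ≤ 0}`, with `‖∇g‖ ≥ ∇min` and `∇²g ⪯ λΔmax·I` on the ball `B(a, m')`. Set
`φ_g = ∇min/λΔmax` and `m_φ` as in the paper. For a unit vector `μ` tangent at `a`
(`⟪μ, ∇g(a)⟫ = 0`) and `0 ≤ m ≤ m_φ`, the point `a + mμ − (m²/φ_g)·∇g(a)/‖∇g(a)‖` lies in
`𝒜`, and the metric projection of `a + mμ` onto `𝒜` is within distance `m²/φ_g` of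
`a + mμ`. -/
theorem tangential_projection_bound {n : ℕ}
    (g : EuclideanSpace ℝ (Fin n) → ℝ) (hg : ContDiff ℝ 3 g)
    (κ : ℝ) (hκ : 0 < κ) (hsc : StrongConvexOn Set.univ κ g)
    (hcompact : IsCompact {x : EuclideanSpace ℝ (Fin n) | g x ≤ 0})
    (a : EuclideanSpace ℝ (Fin n)) (ha : g a = 0)
    (m' gradmin lamΔmax : ℝ) (hm' : 0 < m') (hgradmin : 0 < gradmin)
    (hlamΔmax : 0 < lamΔmax)
    (hgradbnd : ∀ y : EuclideanSpace ℝ (Fin n), ‖y - a‖ ≤ m' →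
      gradmin ≤ ‖gradient g y‖)
    (hHess : ∀ y : EuclideanSpace ℝ (Fin n), ‖y - a‖ ≤ m' →
      ∀ v : EuclideanSpace ℝ (Fin n),
        ⟪fderiv ℝ (gradient g) y v, v⟫ ≤ lamΔmax * ‖v‖ ^ 2)
    (φg mφ : ℝ) (hφg : φg = gradmin / lamΔmax) (hmφ0 : 0 ≤ mφ)
    (hmφ : mφ ^ 2 = min (φg ^ 2 / 2)
      (Real.sqrt (φg ^ 4 / 4 + m' ^ 2 * φg ^ 2) - φg ^ 2 / 2))
    (μ : EuclideanSpace ℝ (Fin n)) (hμ : ‖μ‖ = 1) (hμperp : ⟪μ, gradient g a⟫ = 0)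
    (m : ℝ) (hm0 : 0 ≤ m) (hm : m ≤ mφ) :
    g (a + m • μ - (m ^ 2 / φg) • (‖gradient g a‖⁻¹ • gradient g a)) ≤ 0 ∧
    ∀ p : EuclideanSpace ℝ (Fin n), g p ≤ 0 →
      (∀ q : EuclideanSpace ℝ (Fin n), g q ≤ 0 → dist (a + m • μ) p ≤ dist (a + m • μ) q) →
      ‖p - (a + m • μ)‖ ≤ m ^ 2 / φg := by
  have hφgpos : 0 < φg := by rw [hφg]; positivity
  set ga := gradient g a with hga
  have hganorm : gradmin ≤ ‖ga‖ := hgradbnd a (by rw [sub_self, norm_zero]; exact hm'.le)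
  have hgapos : 0 < ‖ga‖ := lt_of_lt_of_le hgradmin hganorm
  set u := ‖ga‖⁻¹ • ga with hu
  have hunorm : ‖u‖ = 1 := by
    rw [hu, norm_smul, norm_inv, norm_norm, inv_mul_cancel₀ hgapos.ne']
  -- the step vector
  set w := m • μ - (m ^ 2 / φg) • u with hw
  have hcφ : 0 ≤ m ^ 2 / φg := by positivity
  -- inner products involving w
  have hinner_mu_u : ⟪μ, u⟫ = 0 := by
    rw [hu, real_inner_smul_right, hμperp, mul_zero]
  have hgaμ : ⟪ga, μ⟫ = (0:ℝ) := by rw [real_inner_comm]; exact hμperp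
  have hinner_ga_w : ⟪ga, w⟫ = -(m ^ 2 / φg) * ‖ga‖ := by
    rw [hw, inner_sub_right, real_inner_smul_right, real_inner_smul_right,
      hgaμ, hu, real_inner_smul_right, real_inner_self_eq_norm_sq]
    field_simp
    ring
  have hnw : ‖w‖ ^ 2 = m ^ 2 + (m ^ 2 / φg) ^ 2 := by
    have h1 : ⟪m • μ, (m ^ 2 / φg) • u⟫ = 0 := by
      rw [real_inner_smul_left, real_inner_smul_right, hinner_mu_u]; ring
    have h2 := norm_sub_sq_real (m • μ) ((m ^ 2 / φg) • u)
    rw [h1] at h2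
    rw [hw, h2, norm_smul, norm_smul, hμ, hunorm]
    simp [abs_of_nonneg hm0, abs_of_nonneg hcφ, abs_of_pos hφgpos]
  -- basic numeric bounds
  have hs : m ^ 2 ≤ mφ ^ 2 := pow_le_pow_left₀ hm0 hm 2
  have hmφhalf : mφ ^ 2 ≤ φg ^ 2 / 2 := hmφ ▸ min_le_left _ _
  have hball : mφ ^ 4 / φg ^ 2 + mφ ^ 2 ≤ m' ^ 2 := by
    have h1 : mφ ^ 2 + φg ^ 2 / 2 ≤ Real.sqrt (φg ^ 4 / 4 + m' ^ 2 * φg ^ 2) := by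
      have := hmφ ▸ min_le_right (φg ^ 2 / 2)
        (Real.sqrt (φg ^ 4 / 4 + m' ^ 2 * φg ^ 2) - φg ^ 2 / 2)
      linarith
    have hX : (0:ℝ) ≤ φg ^ 4 / 4 + m' ^ 2 * φg ^ 2 := by positivity
    have h2 : (mφ ^ 2 + φg ^ 2 / 2) ^ 2 ≤ φg ^ 4 / 4 + m' ^ 2 * φg ^ 2 := by
      have h := pow_le_pow_left₀ (by positivity) h1 2
      rwa [Real.sq_sqrt hX] at h
    rw [div_add' _ _ _ (by positivity : (φg:ℝ) ^ 2 ≠ 0), div_le_iff₀ (by positivity)]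
    nlinarith [h2]
  have hwm' : ‖w‖ ≤ m' := by
    have h1 : ‖w‖ ^ 2 ≤ m' ^ 2 := by
      rw [hnw]
      have : (m ^ 2 / φg) ^ 2 = m ^ 4 / φg ^ 2 := by ring
      rw [this]
      have h4 : m ^ 4 ≤ mφ ^ 4 := pow_le_pow_left₀ hm0 hm 4
      have : m ^ 4 / φg ^ 2 ≤ mφ ^ 4 / φg ^ 2 :=
        (div_le_div_iff_of_pos_right (by positivity)).mpr h4
      linarith
    exact (pow_le_pow_iff_left₀ (norm_nonneg w) hm'.le two_ne_zero).mp h1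
  -- differentiability facts
  have hgd : Differentiable ℝ g := hg.differentiable (by norm_num)
  have hgradcd : ContDiff ℝ 1 (gradient g) := by
    have h1 : ContDiff ℝ 1 (fderiv ℝ g) := hg.fderiv_right (by norm_num)
    exact (InnerProductSpace.toDual ℝ (EuclideanSpace ℝ (Fin n))).symm.contDiff.comp h1
  have hgraddiff : Differentiable ℝ (gradient g) := hgradcd.differentiable one_ne_zero
  -- the line and its derivatives
  set c : ℝ → EuclideanSpace ℝ (Fin n) := fun t => a + t • w with hc
  have hline : ∀ t : ℝ, HasDerivAt c w t := by
    intro t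
    have := ((hasDerivAt_id t).smul_const w).const_add a
    simpa [hc] using this
  set F0 : ℝ → ℝ := fun t => g (c t) with hF0
  set F1 : ℝ → ℝ := fun t => ⟪w, gradient g (c t)⟫ with hF1
  set F2 : ℝ → ℝ := fun t => ⟪fderiv ℝ (gradient g) (c t) w, w⟫ with hF2
  have hd1 : ∀ t, HasDerivAt F0 (F1 t) t := by
    intro t
    have h1 := (hgd (c t)).hasFDerivAt.comp_hasDerivAt t (hline t)
    have h2 : fderiv ℝ g (c t) w = ⟪w, gradient g (c t)⟫ := by
      rw [real_inner_comm]
      exact (InnerProductSpace.toDual_symm_apply).symm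
    rw [h2] at h1
    exact h1
  have hd2 : ∀ t, HasDerivAt F1 (F2 t) t := by
    intro t
    have hgc : HasDerivAt (fun s => gradient g (c s))
        (fderiv ℝ (gradient g) (c t) w) t :=
      (hgraddiff (c t)).hasFDerivAt.comp_hasDerivAt t (hline t)
    have h1 := (innerSL ℝ w).hasFDerivAt.comp_hasDerivAt t hgc
    have h2 : (innerSL ℝ w) (fderiv ℝ (gradient g) (c t) w) = F2 t := by
      rw [innerSL_apply_apply, hF2]
      exact real_inner_comm _ _
    rw [h2] at h1
    exact h1
  -- Hessian bound along the segment
  have hMbnd : ∀ t ∈ Set.Icc (0:ℝ) 1, F2 t ≤ lamΔmax * ‖w‖ ^ 2 := by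
    intro t ht
    apply hHess
    have : c t - a = t • w := by simp [hc]
    rw [this, norm_smul, Real.norm_eq_abs, abs_of_nonneg ht.1]
    calc t * ‖w‖ ≤ 1 * ‖w‖ := by
          apply mul_le_mul_of_nonneg_right ht.2 (norm_nonneg w)
      _ = ‖w‖ := one_mul _
      _ ≤ m' := hwm'
  -- Taylor bound
  have htaylor := taylor_aux hd1 hd2 hMbnd
  have hF00 : F0 0 = 0 := by simp [hF0, hc, ha]
  have hF10 : F1 0 = -(m ^ 2 / φg) * ‖ga‖ := by
    rw [hF1]
    simp only [hc]
    rw [show a + (0:ℝ) • w = a by simp, real_inner_comm, ← hga, hinner_ga_w]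
  -- conclude the membership
  have hmem : g (a + m • μ - (m ^ 2 / φg) • (‖ga‖⁻¹ • ga)) ≤ 0 := by
    have hpt : a + m • μ - (m ^ 2 / φg) • (‖ga‖⁻¹ • ga) = c 1 := by
      rw [hc]; simp [hw, hu]; abel
    rw [hpt]
    have h1 : F0 1 ≤ F0 0 + F1 0 + lamΔmax * ‖w‖ ^ 2 / 2 := htaylor
    rw [hF00, hF10, hnw] at h1
    have hgm : gradmin = φg * lamΔmax := by
      rw [hφg]; field_simp
    have h2 : -(m ^ 2 / φg) * ‖ga‖ ≤ -(m ^ 2 / φg) * gradmin := by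
      have := mul_le_mul_of_nonneg_left hganorm hcφ
      linarith
    have h3 : -(m ^ 2 / φg) * gradmin = -(lamΔmax * m ^ 2) := by
      rw [hgm]; field_simp
    have hsφ : m ^ 2 ≤ φg ^ 2 := by nlinarith [sq_nonneg φg, hs, hmφhalf]
    have key : F0 1 ≤ -(lamΔmax * m ^ 2)
        + lamΔmax * (m ^ 2 + (m ^ 2 / φg) ^ 2) / 2 := by
      calc F0 1 ≤ 0 + -(m ^ 2 / φg) * ‖ga‖
            + lamΔmax * (m ^ 2 + (m ^ 2 / φg) ^ 2) / 2 := h1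
        _ ≤ -(lamΔmax * m ^ 2) + lamΔmax * (m ^ 2 + (m ^ 2 / φg) ^ 2) / 2 := by
            rw [← h3]; linarith
    have h4 : (m ^ 2 / φg) ^ 2 = m ^ 2 * m ^ 2 / φg ^ 2 := by ring
    have h5 : m ^ 2 * m ^ 2 / φg ^ 2 ≤ m ^ 2 := by
      rw [div_le_iff₀ (by positivity)]
      nlinarith
    calc F0 1 ≤ -(lamΔmax * m ^ 2)
          + lamΔmax * (m ^ 2 + (m ^ 2 / φg) ^ 2) / 2 := key
      _ ≤ 0 := by
          rw [h4]
          have h6 : m ^ 2 + m ^ 2 * m ^ 2 / φg ^ 2 ≤ 2 * m ^ 2 := by linarith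
          have h7 : lamΔmax * (m ^ 2 + m ^ 2 * m ^ 2 / φg ^ 2)
              ≤ lamΔmax * (2 * m ^ 2) := mul_le_mul_of_nonneg_left h6 hlamΔmax.le
          linarith
  refine ⟨hmem, ?_⟩
  intro p hp hmin
  have hdist := hmin _ hmem
  have heq : a + m • μ - (a + m • μ - (m ^ 2 / φg) • (‖ga‖⁻¹ • ga))
      = (m ^ 2 / φg) • (‖ga‖⁻¹ • ga) := by abel
  have h2 : dist (a + m • μ) (a + m • μ - (m ^ 2 / φg) • (‖ga‖⁻¹ • ga))
      = m ^ 2 / φg := by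
    rw [dist_eq_norm, heq, norm_smul, ← hu, hunorm, Real.norm_eq_abs,
      abs_of_nonneg hcφ, mul_one]
  rw [show ‖p - (a + m • μ)‖ = dist (a + m • μ) p by
    rw [dist_comm, dist_eq_norm]]
  calc dist (a + m • μ) p
      ≤ dist (a + m • μ) (a + m • μ - (m ^ 2 / φg) • (‖ga‖⁻¹ • ga)) := hdist
    _ = m ^ 2 / φg := h2
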